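/- For nonnegative integers b and n with n/6 ≤ b ≤ n/4, the blow-up S_{b,n} of the 3-prism graph has exactly ⌊n²/4⌋ edges. -/

import Mathlib

open Finset SimpleGraph

/-- Adjacency of the 3-prism graph: two triangles `{(s,0),(s,1),(s,2)}` for `s : Fin 2`,
with a perfect matching between vertices with the same second coordinate. -/
def prismAdj (p q : Fin 2 × Fin 3) : Prop :=
  (p.1 = q.1 ∧ p.2 ≠ q.2) ∨ (p.1 ≠ q.1 ∧ p.2 = q.2)

/-- The sizes of the six parts of `S_{b,n}`: four parts of size `b` and two parts of
size `⌊(n-4b)/2⌋` and `⌈(n-4b)/2⌉`. -/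
def prismPartSize (b n : ℕ) (p : Fin 2 × Fin 3) : ℕ :=
  if p.2 = 2 then (if p.1 = 0 then (n - 4 * b) / 2 else (n - 4 * b) - (n - 4 * b) / 2) else b

/-- The graph `S_{b,n}`, the blow-up of the 3-prism graph. -/
def SGraph (b n : ℕ) : SimpleGraph (Σ p : Fin 2 × Fin 3, Fin (prismPartSize b n p)) where
  Adj x y := prismAdj x.1 y.1
  symm := ⟨by
    rintro x y (⟨h1, h2⟩ | ⟨h1, h2⟩)
    · exact Or.inl ⟨h1.symm, fun h => h2 h.symm⟩
    · exact Or.inr ⟨fun h => h1 h.symm, h2.symm⟩⟩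
  loopless := ⟨by
    rintro x (⟨_, h⟩ | ⟨h, _⟩) <;> exact h rfl⟩

instance (b n : ℕ) : DecidableRel (SGraph b n).Adj := fun x y =>
  decidable_of_iff ((x.1.1 = y.1.1 ∧ x.1.2 ≠ y.1.2) ∨ (x.1.1 ≠ y.1.1 ∧ x.1.2 = y.1.2)) Iff.rfl

instance : ∀ p q : Fin 2 × Fin 3, Decidable (prismAdj p q) := fun p q =>
  decidable_of_iff ((p.1 = q.1 ∧ p.2 ≠ q.2) ∨ (p.1 ≠ q.1 ∧ p.2 = q.2)) Iff.rfl

lemma sg_degree (b n : ℕ) (x : Σ p : Fin 2 × Fin 3, Fin (prismPartSize b n p)) :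
    (SGraph b n).degree x = ∑ q : Fin 2 × Fin 3, if prismAdj x.1 q then prismPartSize b n q else 0 := by
  have : (SGraph b n).degree x = (univ.filter fun y : Σ p : Fin 2 × Fin 3,
      Fin (prismPartSize b n p) => prismAdj x.1 y.1).card := by
    rw [← SimpleGraph.card_neighborFinset_eq_degree]
    congr 1
    ext y
    rw [SimpleGraph.mem_neighborFinset]
    simp [SGraph]
  rw [this, Finset.card_filter]
  rw [← Finset.univ_sigma_univ, Finset.sum_sigma]
  simp [apply_ite Finset.card]

/-- For nonnegative integers `b` and `n` with `n/6 ≤ b ≤ n/4`, the blow-up `S_{b,n}` of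
the 3-prism graph has exactly `⌊n²/4⌋` edges. -/
theorem SGraph_edge_card (b n : ℕ) (h1 : (n : ℝ) / 6 ≤ b) (h2 : (b : ℝ) ≤ n / 4) :
    (SGraph b n).edgeFinset.card = n ^ 2 / 4 := by
  have hb : 4 * b ≤ n := by
    have : (4 * b : ℝ) ≤ n := by linarith
    exact_mod_cast this
  let c := n - 4 * b
  let k := c / 2
  let m := c - c / 2
  have hsum : ∑ x : Σ p : Fin 2 × Fin 3, Fin (prismPartSize b n p), (SGraph b n).degree x
      = ∑ p : Fin 2 × Fin 3, prismPartSize b n p *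
        (∑ q : Fin 2 × Fin 3, if prismAdj p q then prismPartSize b n q else 0) := by
    rw [← Finset.univ_sigma_univ, Finset.sum_sigma]
    refine Finset.sum_congr rfl fun p _ => ?_
    have hd : ∀ j : Fin (prismPartSize b n p), (SGraph b n).degree ⟨p, j⟩ =
        ∑ q : Fin 2 × Fin 3, if prismAdj p q then prismPartSize b n q else 0 :=
      fun j => sg_degree b n ⟨p, j⟩
    rw [Finset.sum_congr rfl fun j _ => hd j, Finset.sum_const, Finset.card_univ,
      Fintype.card_fin, smul_eq_mul]
  have h2E := (SGraph b n).sum_degrees_eq_twice_card_edges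
  rw [hsum] at h2E
  have hval : ∑ p : Fin 2 × Fin 3, prismPartSize b n p *
        (∑ q : Fin 2 × Fin 3, if prismAdj p q then prismPartSize b n q else 0)
      = b*(b+k+b) + b*(b+k+b) + k*(b+b+m) + b*(b+m+b) + b*(b+m+b) + m*(b+b+k) := by
    rw [Fintype.sum_prod_type]
    simp only [Fin.sum_univ_succ, Fin.sum_univ_zero, Fintype.sum_prod_type]
    norm_num [prismAdj, prismPartSize, Fin.ext_iff]
    ring
  rw [hval] at h2E
  -- arithmetic
  have hkm : k + m = c := by omega
  have hn : n = 4 * b + c := by omega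
  have h4 : b*(b+k+b) + b*(b+k+b) + k*(b+b+m) + b*(b+m+b) + b*(b+m+b) + m*(b+b+k)
      = 2 * (4*b^2 + 2*b*c + k*m) := by
    have : m = c - k := rfl
    nlinarith [hkm]
  have hn2 : n ^ 2 = 4 * (4*b^2 + 2*b*c + k*m) + (c % 2) * (c % 2) := by
    have hck : c = 2 * k + c % 2 := by omega
    have hmk : m = k + c % 2 := by omega
    calc n ^ 2 = (4*b + (2*k + c%2))^2 := by rw [← hck, ← hn]
    _ = 4 * (4*b^2 + 2*b*(2*k + c%2) + k*(k + c%2)) + (c%2)*(c%2) := by ring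
    _ = _ := by rw [← hck, ← hmk]
  have hdiv : n ^ 2 / 4 = 4*b^2 + 2*b*c + k*m := by
    rw [hn2, Nat.mul_add_div (by norm_num)]
    have : c % 2 < 2 := Nat.mod_lt _ (by norm_num)
    interval_cases h : c % 2 <;> simp
  omega
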